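/- Let N_R, N_T, K, Q be positive integers, σ > 0 a real number, and Σ an (N_T·N_R)×(N_T·N_R) complex matrix. For each q = 1,…,Q let v_q ∈ ℂ^{N_T} (viewed as an N_T×1 matrix) and let W_q be a complex N_R×K matrix with W_qᴴ·W_q invertible. Form the (N_T·N_R)×(K·Q) matrix X = [v_1^* ⊗ W_1, …, v_Q^* ⊗ W_Q] by horizontal concatenation of the blocks v_q^* ⊗ W_q, and the (K·Q)×(K·Q) block-diagonal matrix Ξ = σ²·blkdiag(W_1ᴴ·W_1, …, W_Qᴴ·W_Q). Then det(I_{KQ} + Ξ⁻¹·Xᴴ·Σ·X) = det(I_{N_T·N_R} + σ⁻²·(∑_{q=1}^{Q} (v_q^*·v_qᵀ) ⊗ (W_q·(W_qᴴ·W_q)⁻¹·W_qᴴ))·Σ). -/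
import Mathlib


open Matrix Finset
open scoped Kronecker

/-- With `X = [v_1^* ⊗ W_1, …, v_Q^* ⊗ W_Q]` and
`Ξ = σ²·blkdiag(W_1ᴴW_1, …, W_QᴴW_Q)`,
`det(I + Ξ⁻¹·Xᴴ·Σ·X) = det(I + σ⁻²·(∑_q (v_q^*·v_qᵀ) ⊗ (W_q(W_qᴴW_q)⁻¹W_qᴴ))·Σ)`. -/
theorem stmt_2 (N_R N_T K Q : ℕ) (hNR : 0 < N_R) (hNT : 0 < N_T)
    (hK : 0 < K) (hQ : 0 < Q) (σ : ℝ) (hσ : 0 < σ)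
    (Sgm : Matrix (Fin N_T × Fin N_R) (Fin N_T × Fin N_R) ℂ)
    (v : Fin Q → Fin N_T → ℂ)
    (W : Fin Q → Matrix (Fin N_R) (Fin K) ℂ)
    (hW : ∀ q, IsUnit ((W q)ᴴ * W q))
    -- `X = [v_1^* ⊗ W_1, …, v_Q^* ⊗ W_Q]` : horizontal concatenation of the blocks
    (X : Matrix (Fin N_T × Fin N_R) (Fin K × Fin Q) ℂ)
    (hX : X = Matrix.of fun p kq => star (v kq.2 p.1) * W kq.2 p.2 kq.1)
    -- `Ξ = σ²·blkdiag(W_1ᴴ·W_1, …, W_Qᴴ·W_Q)`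
    (Ξ : Matrix (Fin K × Fin Q) (Fin K × Fin Q) ℂ)
    (hΞ : Ξ = Matrix.blockDiagonal fun q => ((σ : ℂ) ^ 2) • ((W q)ᴴ * W q)) :
    (1 + Ξ⁻¹ * Xᴴ * Sgm * X).det =
      (1 + (((σ : ℂ) ^ 2)⁻¹) •
        ((∑ q : Fin Q,
            (Matrix.vecMulVec (fun i => star (v q i)) (v q)) ⊗ₖ
              (W q * ((W q)ᴴ * W q)⁻¹ * (W q)ᴴ)) * Sgm)).det := by
  have hσ2 : ((σ : ℂ) ^ 2) ≠ 0 := by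
    simpa using pow_ne_zero 2 (Complex.ofReal_ne_zero.mpr hσ.ne')
  set M : Matrix (Fin K × Fin Q) (Fin K × Fin Q) ℂ :=
    Matrix.blockDiagonal fun q => (((σ : ℂ) ^ 2)⁻¹) • ((W q)ᴴ * W q)⁻¹ with hM
  have hΞM : Ξ * M = 1 := by
    rw [hΞ, hM, ← Matrix.blockDiagonal_mul, ← Matrix.blockDiagonal_one]
    refine congrArg Matrix.blockDiagonal (funext fun q => ?_)
    rw [Matrix.smul_mul, Matrix.mul_smul, smul_smul, mul_inv_cancel₀ hσ2,
      Matrix.mul_nonsing_inv _ ((Matrix.isUnit_iff_isUnit_det _).mp (hW q)), one_smul, Pi.one_apply]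
  have hinv : Ξ⁻¹ = M := Matrix.inv_eq_right_inv hΞM
  have hmain : X * Ξ⁻¹ * Xᴴ = (((σ : ℂ) ^ 2)⁻¹) •
      ∑ q : Fin Q, (Matrix.vecMulVec (fun i => star (v q i)) (v q)) ⊗ₖ
        (W q * ((W q)ᴴ * W q)⁻¹ * (W q)ᴴ) := by
    rw [hinv, hM, hX]
    ext p p'
    simp only [Matrix.mul_apply, Matrix.smul_apply, Matrix.sum_apply,
      Matrix.blockDiagonal_apply, Matrix.conjTranspose_apply, Matrix.of_apply,
      Matrix.kroneckerMap_apply, Matrix.vecMulVec_apply, smul_eq_mul,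
      Matrix.smul_apply, mul_ite, mul_zero, ite_mul, zero_mul]
    rw [Fintype.sum_prod_type]
    rw [Finset.mul_sum]
    refine Finset.sum_comm.trans ?_
    refine Finset.sum_congr rfl fun q _ => ?_
    simp only [Fintype.sum_prod_type]
    simp only [Finset.sum_ite_eq', Finset.mem_univ, if_true, star_mul', star_star,
      Matrix.mul_apply, Finset.mul_sum, Finset.sum_mul]
    refine Finset.sum_congr rfl fun x _ => ?_
    refine Finset.sum_congr rfl fun j _ => ?_
    ring
  calc (1 + Ξ⁻¹ * Xᴴ * Sgm * X).det
      = (1 + (Ξ⁻¹ * Xᴴ * Sgm) * X).det := by rw [Matrix.mul_assoc]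
    _ = (1 + X * (Ξ⁻¹ * Xᴴ * Sgm)).det := Matrix.det_one_add_mul_comm _ _
    _ = _ := by
        rw [← Matrix.mul_assoc, ← Matrix.mul_assoc, hmain, Matrix.smul_mul]
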